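/- Let X and Y be Banach spaces such that X is isomorphic to a complemented subspace of Y, Y is isomorphic to a complemented subspace of X, and X is isomorphic to the ℓ₁-sum (or ℓ∞-sum) of countably many (or κ-many) copies of itself, with Y complemented in that sum. Then under the Pełczyński decomposition hypotheses—X ≅ (⊕_I X) for an index set I, Y complemented in X, and X complemented in Y—one concludes X ≅ Y. -/

import Mathlib

universe u

instance : Fact ((1 : ENNReal) ≤ 1) := ⟨le_rfl⟩

section helpers

variable {E F : Type u} [NormedAddCommGroup E] [NormedSpace ℝ E]
  [NormedAddCommGroup F] [NormedSpace ℝ F]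

lemma pel_memℓp_one_iff {G : ℕ → Type u} [∀ i, NormedAddCommGroup (G i)]
    {f : ∀ i, G i} : Memℓp f 1 ↔ Summable fun i => ‖f i‖ := by
  rw [memℓp_gen_iff (by norm_num : (0:ℝ) < (1 : ENNReal).toReal)]
  simp [Real.rpow_one]

lemma pel_norm_one {G : ℕ → Type u} [∀ i, NormedAddCommGroup (G i)]
    (f : lp G 1) : ‖f‖ = ∑' i, ‖f i‖ := by
  rw [lp.norm_eq_tsum_rpow (by norm_num : (0:ℝ) < (1 : ENNReal).toReal)]
  simp [Real.rpow_one]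

lemma pel_summable (f : lp (fun _ : ℕ => E) 1) : Summable fun n => ‖f n‖ :=
  pel_memℓp_one_iff.1 (lp.memℓp f)

lemma pel_summable_comp (u : E →L[ℝ] F) {f : ℕ → E} (hf : Summable fun n => ‖f n‖) :
    Summable fun n => ‖u (f n)‖ :=
  (hf.mul_left ‖u‖).of_nonneg_of_le (fun _ => norm_nonneg _) (fun n => u.le_opNorm _)

/-- Fiberwise application of a continuous linear map, as a CLM on ℓ¹ sums. -/
noncomputable def pelMap (u : E →L[ℝ] F) :
    lp (fun _ : ℕ => E) 1 →L[ℝ] lp (fun _ : ℕ => F) 1 :=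
  LinearMap.mkContinuous
    { toFun := fun f => ⟨fun n => u (f n),
        pel_memℓp_one_iff.2 (pel_summable_comp u (pel_summable f))⟩
      map_add' := fun f g => lp.ext (funext fun n => u.map_add (f n) (g n))
      map_smul' := by
        intro c f
        exact lp.ext (funext fun n => u.map_smul c (f n)) }
    ‖u‖ (fun f => by
      have hf := pel_summable f
      rw [pel_norm_one, pel_norm_one]
      calc (∑' n, ‖u (f n)‖) ≤ ∑' n, ‖u‖ * ‖f n‖ :=
            Summable.tsum_le_tsum (fun n => u.le_opNorm _) (pel_summable_comp u hf) (hf.mul_left _)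
        _ = ‖u‖ * ∑' n, ‖f n‖ := tsum_mul_left)

@[simp] lemma pelMap_apply (u : E →L[ℝ] F) (f : lp (fun _ : ℕ => E) 1) (n : ℕ) :
    (pelMap u f) n = u (f n) := rfl

/-- Fiberwise congruence of ℓ¹ sums along a continuous linear equivalence. -/
noncomputable def pelCongr (u : E ≃L[ℝ] F) :
    lp (fun _ : ℕ => E) 1 ≃L[ℝ] lp (fun _ : ℕ => F) 1 :=
  ContinuousLinearEquiv.equivOfInverse (pelMap (u : E →L[ℝ] F))
    (pelMap (u.symm : F →L[ℝ] E))
    (fun f => lp.ext (funext fun n => u.symm_apply_apply (f n)))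
    (fun f => lp.ext (funext fun n => u.apply_symm_apply (f n)))

/-- Pairing map `ℓ¹(E) × ℓ¹(F) → ℓ¹(E × F)`. -/
noncomputable def pelPair :
    (lp (fun _ : ℕ => E) 1 × lp (fun _ : ℕ => F) 1) →L[ℝ] lp (fun _ : ℕ => E × F) 1 :=
  LinearMap.mkContinuous
    { toFun := fun g => ⟨fun n => (g.1 n, g.2 n), by
        refine pel_memℓp_one_iff.2 ?_
        refine ((pel_summable g.1).add (pel_summable g.2)).of_nonneg_of_le
          (fun _ => norm_nonneg _) (fun n => ?_)
        exact max_le (le_add_of_nonneg_right (norm_nonneg _))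
          (le_add_of_nonneg_left (norm_nonneg _))⟩
      map_add' := fun f g => lp.ext (funext fun n => rfl)
      map_smul' := fun c f => lp.ext (funext fun n => rfl) }
    2 (fun g => by
      have h1 := pel_summable g.1
      have h2 := pel_summable g.2
      have hsum : Summable fun n => ‖(g.1 n, g.2 n)‖ :=
        (h1.add h2).of_nonneg_of_le (fun _ => norm_nonneg _) (fun n =>
          max_le (le_add_of_nonneg_right (norm_nonneg _))
            (le_add_of_nonneg_left (norm_nonneg _)))
      rw [pel_norm_one]
      calc (∑' n, ‖(g.1 n, g.2 n)‖) ≤ ∑' n, (‖g.1 n‖ + ‖g.2 n‖) :=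
            Summable.tsum_le_tsum (fun n =>
              max_le (le_add_of_nonneg_right (norm_nonneg _))
                (le_add_of_nonneg_left (norm_nonneg _))) hsum (h1.add h2)
        _ = (∑' n, ‖g.1 n‖) + ∑' n, ‖g.2 n‖ := Summable.tsum_add h1 h2
        _ = ‖g.1‖ + ‖g.2‖ := by rw [pel_norm_one, pel_norm_one]
        _ ≤ ‖g‖ + ‖g‖ := add_le_add (le_max_left _ _) (le_max_right _ _)
        _ = 2 * ‖g‖ := by ring)

/-- `ℓ¹(E × F) ≅ ℓ¹(E) × ℓ¹(F)`. -/
noncomputable def pelProd :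
    lp (fun _ : ℕ => E × F) 1 ≃L[ℝ] lp (fun _ : ℕ => E) 1 × lp (fun _ : ℕ => F) 1 :=
  ContinuousLinearEquiv.equivOfInverse
    ((pelMap (ContinuousLinearMap.fst ℝ E F)).prod (pelMap (ContinuousLinearMap.snd ℝ E F)))
    pelPair
    (fun f => lp.ext (funext fun n => rfl))
    (fun g => Prod.ext (lp.ext (funext fun n => rfl)) (lp.ext (funext fun n => rfl)))

/-- Evaluation at 0, as a CLM on ℓ¹. -/
noncomputable def pelEval0 : lp (fun _ : ℕ => E) 1 →L[ℝ] E :=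
  LinearMap.mkContinuous
    { toFun := fun f => f 0
      map_add' := fun f g => rfl
      map_smul' := fun c f => rfl }
    1 (fun f => by
      rw [one_mul]
      exact lp.norm_apply_le_norm one_ne_zero f 0)

set_option maxHeartbeats 1000000 in
/-- The tail map, as a CLM on ℓ¹. -/
noncomputable def pelTail : lp (fun _ : ℕ => E) 1 →L[ℝ] lp (fun _ : ℕ => E) 1 :=
  LinearMap.mkContinuous
    { toFun := fun f => ⟨fun n => f (n + 1),
        pel_memℓp_one_iff.2 ((summable_nat_add_iff 1).2 (pel_summable f))⟩
      map_add' := fun f g => lp.ext (funext fun n => rfl)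
      map_smul' := fun c f => lp.ext (funext fun n => rfl) }
    1 (fun f => by
      have hf := pel_summable f
      rw [one_mul, pel_norm_one, pel_norm_one]
      show (∑' n, ‖f (n + 1)‖) ≤ ∑' n, ‖f n‖
      linarith [Summable.tsum_eq_zero_add hf, norm_nonneg (f 0)])

/-- The cons map `E × ℓ¹(E) → ℓ¹(E)`. -/
noncomputable def pelCons : (E × lp (fun _ : ℕ => E) 1) →L[ℝ] lp (fun _ : ℕ => E) 1 :=
  LinearMap.mkContinuous
    { toFun := fun g => ⟨fun n => Nat.casesOn n g.1 (fun k => g.2 k), by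
        refine pel_memℓp_one_iff.2 ?_
        exact (summable_nat_add_iff 1).1 (pel_summable g.2)⟩
      map_add' := fun f g => lp.ext (funext fun n => by cases n <;> rfl)
      map_smul' := fun c f => lp.ext (funext fun n => by cases n <;> rfl) }
    2 (fun g => by
      have hs : Summable fun n => ‖(Nat.casesOn n g.1 (fun k => g.2 k) : E)‖ :=
        (summable_nat_add_iff 1).1 (pel_summable g.2)
      rw [pel_norm_one]
      calc (∑' n, ‖(Nat.casesOn n g.1 (fun k => g.2 k) : E)‖)
          = ‖g.1‖ + ∑' n, ‖g.2 n‖ := Summable.tsum_eq_zero_add hs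
        _ = ‖g.1‖ + ‖g.2‖ := by rw [pel_norm_one]
        _ ≤ ‖g‖ + ‖g‖ := add_le_add (le_max_left _ _) (le_max_right _ _)
        _ = 2 * ‖g‖ := by ring)

/-- The shift isomorphism `ℓ¹(E) ≅ E × ℓ¹(E)`. -/
noncomputable def pelShift : lp (fun _ : ℕ => E) 1 ≃L[ℝ] E × lp (fun _ : ℕ => E) 1 :=
  ContinuousLinearEquiv.equivOfInverse (pelEval0.prod pelTail) pelCons
    (fun f => lp.ext (funext fun n => by cases n <;> rfl))
    (fun g => Prod.ext rfl (lp.ext (funext fun n => rfl)))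

end helpers

/-- Pełczyński's decomposition method: if X ≅ (⊕_ℕ X)_{ℓ₁}, Y is complemented in X
(Y ⊕ A ≅ X) and X is complemented in Y (X ⊕ B ≅ Y), then X ≅ Y. -/
theorem stmt18 (X Y A B : Type u)
    [NormedAddCommGroup X] [NormedSpace ℝ X] [CompleteSpace X]
    [NormedAddCommGroup Y] [NormedSpace ℝ Y] [CompleteSpace Y]
    [NormedAddCommGroup A] [NormedSpace ℝ A] [CompleteSpace A]
    [NormedAddCommGroup B] [NormedSpace ℝ B] [CompleteSpace B]
    (e1 : X ≃L[ℝ] lp (fun _ : ℕ => X) 1)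
    (e2 : (Y × A) ≃L[ℝ] X)
    (e3 : (X × B) ≃L[ℝ] Y) :
    Nonempty (X ≃L[ℝ] Y) := by
  -- iso1 : X ≅ Y × X
  let iso1 : X ≃L[ℝ] Y × X :=
    e1.trans <| (pelCongr e2.symm).trans <| pelProd.trans <|
      ((pelShift (E := Y)).prodCongr (ContinuousLinearEquiv.refl ℝ _)).trans <|
      (LinearIsometryEquiv.prodAssoc (R := ℝ) _ _ _).toContinuousLinearEquiv.trans <|
      ((ContinuousLinearEquiv.refl ℝ Y).prodCongr
        (pelProd.symm.trans ((pelCongr e2).trans e1.symm)))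
  -- iso2 : Y ≅ X × Y
  let iso2 : Y ≃L[ℝ] X × Y :=
    e3.symm.trans <| (e1.prodCongr (ContinuousLinearEquiv.refl ℝ B)).trans <|
      ((pelShift (E := X)).prodCongr (ContinuousLinearEquiv.refl ℝ B)).trans <|
      (LinearIsometryEquiv.prodAssoc (R := ℝ) _ _ _).toContinuousLinearEquiv.trans <|
      (ContinuousLinearEquiv.refl ℝ X).prodCongr ((e1.symm.prodCongr (ContinuousLinearEquiv.refl ℝ B)).trans e3)
  exact ⟨iso1.trans <| (ContinuousLinearEquiv.prodComm ℝ Y X).trans iso2.symm⟩
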